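/- Let q : ℝ → ℝ be continuous on [0,1], α, β ∈ ℝ, and λ₁, λ₂ ∈ ℝ. Let g₁, g₂ : ℝ → ℝ be twice continuously differentiable with −gᵢ'' + q gᵢ = λᵢ gᵢ on [0,1], and suppose both satisfy the separated boundary conditions gᵢ(0)cos α + gᵢ'(0)sin α = 0 and gᵢ(1)cos β + gᵢ'(1)sin β = 0 (i = 1,2). Then Γ(g₁², g₂²) = ∫₀¹ (g₁(x)² (g₂²)'(x) − (g₁²)'(x) g₂(x)²) dx = 0. -/

import Mathlib

/-- If `g₁, g₂` are `C²` solutions of `−u'' + q u = λᵢ u` on `[0,1]` satisfying the same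
separated boundary conditions with angles `α` at `0` and `β` at `1`, then
`Γ(g₁², g₂²) = ∫₀¹ (g₁² (g₂²)' − (g₁²)' g₂²) = 0`. -/
theorem gamma_sq_eq_zero_same_bc
    (q : ℝ → ℝ) (hq : ContinuousOn q (Set.Icc (0:ℝ) 1))
    (α β : ℝ) (lam₁ lam₂ : ℝ)
    (g₁ g₁' g₁'' g₂ g₂' g₂'' : ℝ → ℝ)
    (hg₁ : ∀ x ∈ Set.Icc (0:ℝ) 1, HasDerivAt g₁ (g₁' x) x ∧ HasDerivAt g₁' (g₁'' x) x)
    (hg₁'' : ContinuousOn g₁'' (Set.Icc (0:ℝ) 1))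
    (hg₂ : ∀ x ∈ Set.Icc (0:ℝ) 1, HasDerivAt g₂ (g₂' x) x ∧ HasDerivAt g₂' (g₂'' x) x)
    (hg₂'' : ContinuousOn g₂'' (Set.Icc (0:ℝ) 1))
    (heq₁ : ∀ x ∈ Set.Icc (0:ℝ) 1, -g₁'' x + q x * g₁ x = lam₁ * g₁ x)
    (heq₂ : ∀ x ∈ Set.Icc (0:ℝ) 1, -g₂'' x + q x * g₂ x = lam₂ * g₂ x)
    (hbc₁0 : g₁ 0 * Real.cos α + g₁' 0 * Real.sin α = 0)
    (hbc₁1 : g₁ 1 * Real.cos β + g₁' 1 * Real.sin β = 0)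
    (hbc₂0 : g₂ 0 * Real.cos α + g₂' 0 * Real.sin α = 0)
    (hbc₂1 : g₂ 1 * Real.cos β + g₂' 1 * Real.sin β = 0) :
    (∫ x in (0:ℝ)..1, ((g₁ x)^2 * (2 * g₂ x * g₂' x) - (2 * g₁ x * g₁' x) * (g₂ x)^2)) = 0 := by

  have hIcc : Set.uIcc (0:ℝ) 1 = Set.Icc (0:ℝ) 1 := by
    rw [Set.uIcc_of_le]; norm_num
  set W : ℝ → ℝ := fun x => g₁ x * g₂' x - g₁' x * g₂ x with hWdef
  have hW0 : W 0 = 0 := by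
    simp only [hWdef]
    linear_combination (Real.cos α * g₂' 0 - Real.sin α * g₂ 0) * hbc₁0 -
      (Real.cos α * g₁' 0 - Real.sin α * g₁ 0) * hbc₂0 -
      (g₁ 0 * g₂' 0 - g₁' 0 * g₂ 0) * (Real.sin_sq_add_cos_sq α)
  have hW1 : W 1 = 0 := by
    simp only [hWdef]
    linear_combination (Real.cos β * g₂' 1 - Real.sin β * g₂ 1) * hbc₁1 -
      (Real.cos β * g₁' 1 - Real.sin β * g₁ 1) * hbc₂1 -
      (g₁ 1 * g₂' 1 - g₁' 1 * g₂ 1) * (Real.sin_sq_add_cos_sq β)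
  have hWd : ∀ x ∈ Set.Icc (0:ℝ) 1,
      HasDerivAt W ((lam₁ - lam₂) * (g₁ x * g₂ x)) x := by
    intro x hx
    obtain ⟨h1, h1'⟩ := hg₁ x hx
    obtain ⟨h2, h2'⟩ := hg₂ x hx
    have hd := (h1.mul h2').sub (h1'.mul h2)
    refine hd.congr_deriv (Eq.symm ?_)
    have e1 := heq₁ x hx
    have e2 := heq₂ x hx
    linear_combination g₁ x * e2 - g₂ x * e1
  have hcontW : ContinuousOn W (Set.Icc (0:ℝ) 1) := fun x hx =>
    ((hWd x hx).continuousAt).continuousWithinAt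
  have hcont1 : ContinuousOn g₁ (Set.Icc (0:ℝ) 1) := fun x hx =>
    ((hg₁ x hx).1.continuousAt).continuousWithinAt
  have hcont2 : ContinuousOn g₂ (Set.Icc (0:ℝ) 1) := fun x hx =>
    ((hg₂ x hx).1.continuousAt).continuousWithinAt
  rcases eq_or_ne lam₁ lam₂ with h | h
  · -- equal eigenvalues: W vanishes identically
    have hWz : ∀ x ∈ Set.Icc (0:ℝ) 1, W x = 0 := by
      intro x hx
      have := constant_of_has_deriv_right_zero (f := W) (a := (0:ℝ)) (b := 1) hcontW
        (fun y hy => by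
          have hd := hWd y (Set.Ico_subset_Icc_self hy)
          rw [h] at hd
          simpa using hd.hasDerivWithinAt) x hx
      rw [this, hW0]
    rw [intervalIntegral.integral_congr (g := fun _ => (0:ℝ))
      (by
        intro x hx
        rw [hIcc] at hx
        have hz := hWz x hx
        simp only [hWdef] at hz
        dsimp only
        linear_combination (2 * g₁ x * g₂ x) * hz)]
    simp
  · -- distinct eigenvalues: FTC on W²
    have hInt : IntervalIntegrable
        (fun x => 2 * W x * ((lam₁ - lam₂) * (g₁ x * g₂ x))) MeasureTheory.volume 0 1 := by
      apply ContinuousOn.intervalIntegrable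
      rw [hIcc]
      exact (continuousOn_const.mul hcontW).mul
        (continuousOn_const.mul (hcont1.mul hcont2))
    have hFTC : (∫ x in (0:ℝ)..1, 2 * W x * ((lam₁ - lam₂) * (g₁ x * g₂ x)))
        = W 1 ^ 2 - W 0 ^ 2 := by
      have hderiv : ∀ x ∈ Set.uIcc (0:ℝ) 1, HasDerivAt (fun y => W y ^ 2)
          (2 * W x * ((lam₁ - lam₂) * (g₁ x * g₂ x))) x := by
        intro x hx
        rw [hIcc] at hx
        have := (hWd x hx).pow 2
        refine this.congr_deriv (Eq.symm ?_)
        ring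
      simpa using intervalIntegral.integral_eq_sub_of_hasDerivAt hderiv hInt
    have goalEq : (∫ x in (0:ℝ)..1,
          ((g₁ x)^2 * (2 * g₂ x * g₂' x) - (2 * g₁ x * g₁' x) * (g₂ x)^2))
        = ∫ x in (0:ℝ)..1, (lam₁ - lam₂)⁻¹ * (2 * W x * ((lam₁ - lam₂) * (g₁ x * g₂ x))) := by
      apply intervalIntegral.integral_congr
      intro x hx
      simp only [hWdef]
      have hne : lam₁ - lam₂ ≠ 0 := sub_ne_zero.mpr h
      field_simp
    rw [goalEq, intervalIntegral.integral_const_mul, hFTC, hW0, hW1]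
    ring
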